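/- The ordering of monomials is a strict total order on Λ, and for every k ∈ ℤ the level set Λ_{(k)} is well-ordered: every nonempty subset of Λ_{(k)} has a least element. -/

import Mathlib

set_option synthInstance.maxHeartbeats 1000000
set_option maxHeartbeats 2000000

namespace MB

/-! Elements of `Λ` are identified with their exponent sequences: finite non-increasing
lists of nonzero integers. -/

/-- The ordering on exponent sequences: compare exponent sums, then lengths (indices),
then, at the last differing position, absolute values and signs of the exponents. -/
def lamLT (x y : List ℤ) : Prop :=
  x.sum < y.sum ∨
  (x.sum = y.sum ∧
    (x.length < y.length ∨
      (x.length = y.length ∧ ∃ (a : ℕ) (ha : a < x.length) (hb : a < y.length),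
        x.get ⟨a, ha⟩ ≠ y.get ⟨a, hb⟩ ∧
        (∀ (b : ℕ) (h1 : b < x.length) (h2 : b < y.length), a < b →
          x.get ⟨b, h1⟩ = y.get ⟨b, h2⟩) ∧
        (|x.get ⟨a, ha⟩| < |y.get ⟨a, hb⟩| ∨
          (|x.get ⟨a, ha⟩| = |y.get ⟨a, hb⟩| ∧ y.get ⟨a, hb⟩ < x.get ⟨a, ha⟩)))))

/-- The set `Λ`, identified with the set of finite non-increasing sequences of nonzero
integers. -/
def Lam : Type := {l : List ℤ // l.Chain' (· ≥ ·) ∧ ∀ x ∈ l, x ≠ 0}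

/-- The ordering on `Λ`. -/
def LamLT (x y : Lam) : Prop := lamLT x.val y.val

/-! ### Auxiliary definitions and lemmas -/

/-- The key comparison on individual exponents: smaller absolute value first,
and for equal absolute value, the larger (positive) one first. -/
def klt (m n : ℤ) : Prop := |m| < |n| ∨ (|m| = |n| ∧ n < m)

lemma klt_ne {m n : ℤ} (h : klt m n) : m ≠ n := by
  rcases h with h | ⟨h1, h2⟩ <;> rintro rfl <;> omega

lemma klt_trans {a b c : ℤ} (h1 : klt a b) (h2 : klt b c) : klt a c := by
  rcases h1 with h1 | ⟨h1, h1'⟩ <;> rcases h2 with h2 | ⟨h2, h2'⟩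
  · exact Or.inl (h1.trans h2)
  · exact Or.inl (h2 ▸ h1)
  · exact Or.inl (h1 ▸ h2)
  · exact Or.inr ⟨h1.trans h2, h2'.trans h1'⟩

lemma klt_connex {m n : ℤ} (h : m ≠ n) : klt m n ∨ klt n m := by
  rcases lt_trichotomy |m| |n| with hl | hl | hl
  · exact Or.inl (Or.inl hl)
  · rcases lt_trichotomy m n with h2 | h2 | h2
    · exact Or.inr (Or.inr ⟨hl.symm, h2⟩)
    · exact absurd h2 h
    · exact Or.inl (Or.inr ⟨hl, h2⟩)
  · exact Or.inr (Or.inl hl)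

/-- The "last differing position" comparison, for equal-sum, equal-length sequences. -/
def Core (x y : List ℤ) : Prop :=
  ∃ (a : ℕ) (ha : a < x.length) (hb : a < y.length),
    x[a] ≠ y[a] ∧
    (∀ (b : ℕ) (h1 : b < x.length) (h2 : b < y.length), a < b → x[b] = y[b]) ∧
    klt x[a] y[a]

lemma lamLT_iff (x y : List ℤ) :
    lamLT x y ↔ x.sum < y.sum ∨
      (x.sum = y.sum ∧ (x.length < y.length ∨ (x.length = y.length ∧ Core x y))) := by
  unfold lamLT Core klt
  simp only [List.get_eq_getElem]

lemma core_irrefl (x : List ℤ) : ¬ Core x x := by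
  rintro ⟨a, ha, hb, hne, -, -⟩
  exact hne rfl

lemma core_trans {x y z : List ℤ} (hxy : x.length = y.length) (hyz : y.length = z.length)
    (h1 : Core x y) (h2 : Core y z) : Core x z := by
  obtain ⟨a, ha, ha', hne1, haft1, hk1⟩ := h1
  obtain ⟨c, hc, hc', hne2, haft2, hk2⟩ := h2
  rcases Nat.lt_trichotomy a c with hac | rfl | hac
  · refine ⟨c, by omega, by omega, ?_, ?_, ?_⟩
    · have := haft1 c (by omega) (by omega) hac
      rw [this]; exact klt_ne hk2
    · intro b h1 h2 hb
      rw [haft1 b (by omega) (by omega) (by omega), haft2 b (by omega) (by omega) hb]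
    · have := haft1 c (by omega) (by omega) hac
      rw [this]; exact hk2
  · refine ⟨a, by omega, by omega, ?_, ?_, klt_trans hk1 hk2⟩
    · exact klt_ne (klt_trans hk1 hk2)
    · intro b h1 h2 hb
      rw [haft1 b (by omega) (by omega) hb, haft2 b (by omega) (by omega) hb]
  · refine ⟨a, by omega, by omega, ?_, ?_, ?_⟩
    · have := haft2 a (by omega) (by omega) hac
      rw [← this]; exact klt_ne hk1
    · intro b h1 h2 hb
      rw [haft1 b (by omega) (by omega) hb, haft2 b (by omega) (by omega) (by omega)]
    · have := haft2 a (by omega) (by omega) hac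
      rw [← this]; exact hk1

lemma core_connex {x y : List ℤ} (hlen : x.length = y.length) (hne : x ≠ y) :
    Core x y ∨ Core y x := by
  classical
  set D : Finset ℕ := (Finset.range x.length).filter (fun a => x.getD a 37 ≠ y.getD a 37)
    with hD
  have hDne : D.Nonempty := by
    by_contra hemp
    apply hne
    apply List.ext_getElem hlen
    intro n h1 h2
    have hn : n ∉ D := fun hmem => hemp ⟨n, hmem⟩
    rw [hD, Finset.mem_filter] at hn
    push_neg at hn
    have := hn (Finset.mem_range.mpr h1)
    rwa [List.getD_eq_getElem x 37 h1, List.getD_eq_getElem y 37 h2] at this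
  set a := D.max' hDne with haDef
  have haD : a ∈ D := D.max'_mem hDne
  rw [hD, Finset.mem_filter, Finset.mem_range] at haD
  obtain ⟨ha, hne'⟩ := haD
  have hb : a < y.length := hlen ▸ ha
  rw [List.getD_eq_getElem x 37 ha, List.getD_eq_getElem y 37 hb] at hne'
  have haft : ∀ (b : ℕ) (h1 : b < x.length) (h2 : b < y.length), a < b → x[b] = y[b] := by
    intro b h1 h2 hab
    by_contra hneq
    have hbD : b ∈ D := by
      rw [hD, Finset.mem_filter, Finset.mem_range]
      refine ⟨h1, ?_⟩
      rwa [List.getD_eq_getElem x 37 h1, List.getD_eq_getElem y 37 h2]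
    exact absurd (D.le_max' b hbD) (by omega)
  rcases klt_connex hne' with hk | hk
  · exact Or.inl ⟨a, ha, hb, hne', haft, hk⟩
  · refine Or.inr ⟨a, hb, ha, Ne.symm hne', ?_, hk⟩
    intro b h1 h2 hab
    exact (haft b h2 h1 hab).symm

/-- Every nonempty set of integer lists of a fixed length has a least element under
the `Core` ordering. -/
lemma exists_least : ∀ (n : ℕ) (T : Set (List ℤ)), T.Nonempty →
    (∀ l ∈ T, l.length = n) → ∃ a ∈ T, ∀ b ∈ T, a = b ∨ Core a b := by
  intro n
  induction n with
  | zero =>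
    intro T ⟨l, hl⟩ hlen
    have : l = [] := List.eq_nil_of_length_eq_zero (hlen l hl)
    subst this
    refine ⟨[], hl, fun b hb => Or.inl ?_⟩
    exact (List.eq_nil_of_length_eq_zero (hlen b hb)).symm
  | succ n ih =>
    intro T hTne hlen
    -- the "last entry" of a list in T
    set f : List ℤ → ℤ := fun l => l.getD n 0 with hf
    have hfget : ∀ l ∈ T, ∀ (h : n < l.length), f l = l[n] := by
      intro l hl h
      exact List.getD_eq_getElem l 0 h
    have hlt : ∀ l ∈ T, n < l.length := by intro l hl; rw [hlen l hl]; omega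
    -- minimize the absolute value of the last entry
    set A : Set ℕ := (fun l => (f l).natAbs) '' T with hA
    have hAne : A.Nonempty := hTne.image _
    set m₀ := Nat.lt_wfRel.wf.min A hAne with hm0
    have hm0A : m₀ ∈ A := Nat.lt_wfRel.wf.min_mem A hAne
    have hm0min : ∀ m ∈ A, m₀ ≤ m := by
      intro m hm
      by_contra hlt'
      exact Nat.lt_wfRel.wf.not_lt_min A hm (by simpa [Nat.lt_wfRel] using hlt' : m < m₀)
    -- choose the best last entry v
    have hkey : ∃ v : ℤ, v.natAbs = m₀ ∧ (∃ l ∈ T, f l = v) ∧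
        ∀ l ∈ T, f l = v ∨ klt v (f l) := by
      classical
      obtain ⟨l₀, hl₀T, hl₀⟩ := hm0A
      by_cases hpos : ∃ l ∈ T, f l = (m₀ : ℤ)
      · refine ⟨(m₀ : ℤ), Int.natAbs_natCast m₀, hpos, ?_⟩
        intro l hl
        have hge : m₀ ≤ (f l).natAbs := hm0min _ ⟨l, hl, rfl⟩
        rcases Nat.lt_or_ge m₀ (f l).natAbs with hgt | hle
        · refine Or.inr (Or.inl ?_)
          rw [Int.abs_eq_natAbs, Int.abs_eq_natAbs, Int.natAbs_natCast]
          exact_mod_cast hgt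
        · have heq : (f l).natAbs = m₀ := le_antisymm hle hge
          rcases Int.natAbs_eq_iff.mp heq with h | h
          · exact Or.inl h
          · rcases Nat.eq_zero_or_pos m₀ with h0 | h0
            · left; rw [h, h0]; simp
            · refine Or.inr (Or.inr ⟨?_, ?_⟩)
              · rw [Int.abs_eq_natAbs, Int.abs_eq_natAbs, Int.natAbs_natCast, heq]
              · rw [h]; omega
      · refine ⟨-(m₀ : ℤ), by simp, ?_, ?_⟩
        · refine ⟨l₀, hl₀T, ?_⟩
          rcases Int.natAbs_eq_iff.mp hl₀ with h | h
          · exact absurd ⟨l₀, hl₀T, h⟩ hpos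
          · exact h
        · intro l hl
          have hge : m₀ ≤ (f l).natAbs := hm0min _ ⟨l, hl, rfl⟩
          rcases Nat.lt_or_ge m₀ (f l).natAbs with hgt | hle
          · refine Or.inr (Or.inl ?_)
            rw [Int.abs_eq_natAbs, Int.abs_eq_natAbs, Int.natAbs_neg, Int.natAbs_natCast]
            exact_mod_cast hgt
          · have heq : (f l).natAbs = m₀ := le_antisymm hle hge
            rcases Int.natAbs_eq_iff.mp heq with h | h
            · exact absurd ⟨l, hl, h⟩ hpos
            · exact Or.inl h
    obtain ⟨v, hvabs, ⟨lv, hlvT, hlv⟩, hvmin⟩ := hkey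
    -- the lists whose last entry is v
    set T2 : Set (List ℤ) := {l ∈ T | f l = v} with hT2
    have hT2ne : T2.Nonempty := ⟨lv, hlvT, hlv⟩
    have hT2sub : T2 ⊆ T := fun l hl => hl.1
    -- every element of T2 is its dropLast followed by v
    have hsplit : ∀ l ∈ T2, l = l.dropLast ++ [v] := by
      intro l hl
      have hne : l ≠ [] := by
        intro h
        have := hlen l (hT2sub hl); rw [h] at this; simp at this
      have h1 : l.dropLast ++ [l.getLast hne] = l := List.dropLast_append_getLast hne
      have h2 : l.getLast hne = v := by
        have hll := hlen l (hT2sub hl)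
        rw [List.getLast_eq_getElem hne, ← hl.2,
          hfget l (hT2sub hl) (hlt l (hT2sub hl))]
        congr 1
        omega
      conv_lhs => rw [← h1]
      rw [h2]
    set T3 : Set (List ℤ) := List.dropLast '' T2 with hT3
    have hT3ne : T3.Nonempty := hT2ne.image _
    have hT3len : ∀ l ∈ T3, l.length = n := by
      rintro _ ⟨l, hl, rfl⟩
      rw [List.length_dropLast, hlen l (hT2sub hl)]
      omega
    obtain ⟨d, hdT3, hdmin⟩ := ih T3 hT3ne hT3len
    obtain ⟨ld, hldT2, hldEq⟩ := hdT3
    have hadef : d ++ [v] = ld := by rw [← hldEq]; exact (hsplit ld hldT2).symm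
    refine ⟨d ++ [v], hadef ▸ hT2sub hldT2, ?_⟩
    have hdlen : d.length = n := hT3len d ⟨ld, hldT2, hldEq⟩
    have halen : (d ++ [v]).length = n + 1 := by simp [hdlen]
    have hagetn : ∀ (h : n < (d ++ [v]).length), (d ++ [v])[n] = v :=
      fun h => List.getElem_concat_length hdlen.symm h
    intro b hbT
    have hblen : b.length = n + 1 := hlen b hbT
    have hbget : f b = b[n]'(by omega) := hfget b hbT (by omega)
    rcases hvmin b hbT with hbv | hbklt
    · -- b ∈ T2
      have hbT2 : b ∈ T2 := ⟨hbT, hbv⟩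
      have hbsplit : b = b.dropLast ++ [v] := hsplit b hbT2
      have hbdT3 : b.dropLast ∈ T3 := ⟨b, hbT2, rfl⟩
      rcases hdmin b.dropLast hbdT3 with heq | hcore
      · left; rw [heq, ← hbsplit]
      · right
        obtain ⟨i, hi, hi', hne1, haft1, hk1⟩ := hcore
        have hbdlen : b.dropLast.length = n := hT3len _ hbdT3
        have hilt : i < n := by omega
        have hgd : ∀ (h : i < (d ++ [v]).length), (d ++ [v])[i] = d[i]'hi :=
          fun h => List.getElem_append_left hi
        have hia : i < (d ++ [v]).length := by omega
        have hib : i < b.length := by omega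
        have hgb : b.dropLast[i]'hi' = b[i]'hib := List.getElem_dropLast hi'
        refine ⟨i, hia, hib, ?_, ?_, ?_⟩
        · rw [hgd hia, ← hgb]; exact hne1
        · intro c h1 h2 hic
          rcases Nat.lt_or_ge c n with hcn | hcn
          · have hcd : c < d.length := by omega
            have h3 : (d ++ [v])[c]'h1 = d[c]'hcd := List.getElem_append_left hcd
            have h4 : b.dropLast[c]'(by omega) = b[c]'h2 := List.getElem_dropLast (by omega)
            rw [h3, ← h4]
            exact haft1 c hcd (by omega) hic
          · have hcn' : c = n := by omega
            subst hcn'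
            rw [hagetn h1, ← hbget, hbv]
        · rw [hgd hia, ← hgb]; exact hk1
    · -- the last entry of b beats: Core (d ++ [v]) b at position n
      right
      refine ⟨n, by omega, by omega, ?_, ?_, ?_⟩
      · rw [hagetn (by omega), ← hbget]; exact klt_ne hbklt
      · intro c h1 h2 hnc
        rw [halen] at h1; omega
      · rw [hagetn (by omega), ← hbget]; exact hbklt

lemma lamLT_trans {x y z : List ℤ} (h1 : lamLT x y) (h2 : lamLT y z) : lamLT x z := by
  rw [lamLT_iff] at *
  rcases h1 with h1 | ⟨hs1, h1⟩
  · rcases h2 with h2 | ⟨hs2, h2⟩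
    · exact Or.inl (h1.trans h2)
    · exact Or.inl (hs2 ▸ h1)
  · rcases h2 with h2 | ⟨hs2, h2⟩
    · exact Or.inl (hs1 ▸ h2)
    · refine Or.inr ⟨hs1.trans hs2, ?_⟩
      rcases h1 with h1 | ⟨hl1, h1⟩
      · rcases h2 with h2 | ⟨hl2, h2⟩
        · exact Or.inl (h1.trans h2)
        · exact Or.inl (hl2 ▸ h1)
      · rcases h2 with h2 | ⟨hl2, h2⟩
        · exact Or.inl (hl1 ▸ h2)
        · exact Or.inr ⟨hl1.trans hl2, core_trans hl1 hl2 h1 h2⟩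

/-- The ordering of monomials is a strict total order on `Λ`, and every
level set `Λ_{(k)}` is well-ordered: every nonempty subset has a least element. -/
theorem lam_strict_total_order_and_well_ordered :
    IsStrictTotalOrder Lam LamLT ∧
    ∀ (k : ℤ) (S : Set Lam), S.Nonempty → (∀ l ∈ S, l.val.sum = k) →
      ∃ a ∈ S, ∀ b ∈ S, a = b ∨ LamLT a b := by
  constructor
  · refine { trichotomous := ?_, irrefl := ?_, trans := ?_ }
    · intro x y
      suffices key : LamLT x y ∨ x = y ∨ LamLT y x from
        fun h1 h2 => (key.resolve_left h1).resolve_right h2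
      rcases eq_or_ne x y with rfl | hne
      · exact Or.inr (Or.inl rfl)
      · have hvne : x.val ≠ y.val := fun h => hne (Subtype.ext h)
        rcases lt_trichotomy x.val.sum y.val.sum with hs | hs | hs
        · exact Or.inl (Or.inl hs)
        · rcases lt_trichotomy x.val.length y.val.length with hl | hl | hl
          · exact Or.inl ((lamLT_iff _ _).mpr (Or.inr ⟨hs, Or.inl hl⟩))
          · rcases core_connex hl hvne with hc | hc
            · exact Or.inl ((lamLT_iff _ _).mpr (Or.inr ⟨hs, Or.inr ⟨hl, hc⟩⟩))
            · exact Or.inr (Or.inr ((lamLT_iff _ _).mpr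
                (Or.inr ⟨hs.symm, Or.inr ⟨hl.symm, hc⟩⟩)))
          · exact Or.inr (Or.inr ((lamLT_iff _ _).mpr (Or.inr ⟨hs.symm, Or.inl hl⟩)))
        · exact Or.inr (Or.inr ((lamLT_iff _ _).mpr (Or.inl hs)))
    · intro x hx
      rcases (lamLT_iff _ _).mp hx with h | ⟨-, h | ⟨-, h⟩⟩
      · exact absurd h (lt_irrefl _)
      · exact absurd h (lt_irrefl _)
      · exact core_irrefl _ h
    · intro x y z h1 h2
      exact lamLT_trans h1 h2
  · intro k S hSne hsum
    classical
    -- minimize length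
    set L : Set ℕ := (fun l : Lam => l.val.length) '' S with hL
    have hLne : L.Nonempty := hSne.image _
    set n := Nat.lt_wfRel.wf.min L hLne with hn
    have hnL : n ∈ L := Nat.lt_wfRel.wf.min_mem L hLne
    have hnmin : ∀ m ∈ L, n ≤ m := by
      intro m hm
      by_contra hlt'
      exact Nat.lt_wfRel.wf.not_lt_min L hm (by simpa [Nat.lt_wfRel] using hlt' : m < n)
    set S1 : Set Lam := {l ∈ S | l.val.length = n} with hS1
    obtain ⟨l₁, hl₁S, hl₁len⟩ := hnL
    have hS1ne : S1.Nonempty := ⟨l₁, hl₁S, hl₁len⟩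
    set T : Set (List ℤ) := (fun l : Lam => l.val) '' S1 with hT
    have hTne : T.Nonempty := hS1ne.image _
    have hTlen : ∀ l ∈ T, l.length = n := by rintro _ ⟨l, hl, rfl⟩; exact hl.2
    obtain ⟨a0, ha0T, ha0min⟩ := exists_least n T hTne hTlen
    obtain ⟨a, haS1, haEq⟩ := ha0T
    refine ⟨a, haS1.1, ?_⟩
    intro b hbS
    have hbge : n ≤ b.val.length := hnmin _ ⟨b, hbS, rfl⟩
    have hsumeq : a.val.sum = b.val.sum := by rw [hsum a haS1.1, hsum b hbS]
    rcases Nat.lt_or_ge n b.val.length with hblt | hble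
    · right
      rw [LamLT, lamLT_iff]
      exact Or.inr ⟨hsumeq, Or.inl (haS1.2 ▸ hblt)⟩
    · have hbn : b.val.length = n := by omega
      have hbT : b.val ∈ T := ⟨b, ⟨hbS, hbn⟩, rfl⟩
      rcases ha0min b.val hbT with heq | hcore
      · left
        exact Subtype.ext (haEq.trans heq)
      · right
        rw [LamLT, lamLT_iff]
        refine Or.inr ⟨hsumeq, Or.inr ⟨?_, ?_⟩⟩
        · rw [haS1.2, hbn]
        · rw [show a.val = a0 from haEq]; exact hcore

end MB
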